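/- Let k ≥ 1 be a real number and let k₁, k₂ > 0 satisfy k₁ + k₂ ≥ k − √k/300 and min(k₁,k₂) ≥ k^{2/3}/2, with k sufficiently large (k ≥ 2^{25}). Then k₁^{3/4} + k₂^{3/4} ≥ k^{3/4} + √k/300. -/
import Mathlib

lemma key_subadd {a b : ℝ} (hb : 0 < b) (hba : b ≤ a) :
    (a + b) ^ ((3:ℝ)/4) ≤ a ^ ((3:ℝ)/4) + 3/4 * b ^ ((3:ℝ)/4) := by
  have ha : 0 < a := hb.trans_le hba
  have h1 : a + b = a * (1 + b / a) := by field_simp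
  rw [h1, Real.mul_rpow ha.le (by positivity)]
  have hbern : (1 + b / a) ^ ((3:ℝ)/4) ≤ 1 + (3:ℝ)/4 * (b / a) :=
    rpow_one_add_le_one_add_mul_self (le_trans (by norm_num) (by positivity : (0:ℝ) ≤ b/a)) (by norm_num) (by norm_num)
  have h2 : a ^ ((3:ℝ)/4) * (1 + b / a) ^ ((3:ℝ)/4)
      ≤ a ^ ((3:ℝ)/4) + 3/4 * (b * a ^ ((3:ℝ)/4 - 1)) := by
    calc a ^ ((3:ℝ)/4) * (1 + b / a) ^ ((3:ℝ)/4)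
        ≤ a ^ ((3:ℝ)/4) * (1 + (3:ℝ)/4 * (b / a)) := by
          exact mul_le_mul_of_nonneg_left hbern (by positivity)
      _ = a ^ ((3:ℝ)/4) + 3/4 * (b * (a ^ ((3:ℝ)/4) / a)) := by ring
      _ = a ^ ((3:ℝ)/4) + 3/4 * (b * a ^ ((3:ℝ)/4 - 1)) := by
          rw [Real.rpow_sub ha, Real.rpow_one]
  refine h2.trans ?_
  have h3 : a ^ ((3:ℝ)/4 - 1) ≤ b ^ ((3:ℝ)/4 - 1) :=
    Real.rpow_le_rpow_of_nonpos hb hba (by norm_num)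
  have h4 : b * a ^ ((3:ℝ)/4 - 1) ≤ b ^ ((3:ℝ)/4) := by
    calc b * a ^ ((3:ℝ)/4 - 1) ≤ b * b ^ ((3:ℝ)/4 - 1) :=
          mul_le_mul_of_nonneg_left h3 hb.le
      _ = b ^ ((3:ℝ)/4) := by
          rw [← Real.rpow_one_add' hb.le (by norm_num)]; norm_num
  linarith

theorem stmt_18 (k k₁ k₂ : ℝ) (hk : (2 : ℝ) ^ (25 : ℕ) ≤ k) (h1 : 0 < k₁) (h2 : 0 < k₂)
    (hsum : k - Real.sqrt k / 300 ≤ k₁ + k₂)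
    (hmin : k ^ ((2 : ℝ) / 3) / 2 ≤ min k₁ k₂) :
    k ^ ((3 : ℝ) / 4) + Real.sqrt k / 300 ≤ k₁ ^ ((3 : ℝ) / 4) + k₂ ^ ((3 : ℝ) / 4) := by
  have hk0 : (0:ℝ) < k := by norm_num at hk ⊢; linarith
  set ε : ℝ := Real.sqrt k / 300 with hε
  have hsq := Real.sq_sqrt hk0.le
  have hsqnn := Real.sqrt_nonneg k
  have hsqrt : 300 ≤ Real.sqrt k := by nlinarith [hk, (by norm_num : (90000:ℝ) ≤ 2 ^ (25:ℕ))]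
  have hsk : Real.sqrt k ≤ k := by nlinarith
  have hε1 : (1:ℝ) ≤ ε := by rw [hε]; linarith
  have hεk : ε ≤ k - ε := by rw [hε]; nlinarith
  have hε0 : (0:ℝ) < ε := by linarith
  -- (k - ε)^(3/4) ≥ k^(3/4) - ε
  have hstep2 : k ^ ((3:ℝ)/4) - ε ≤ (k - ε) ^ ((3:ℝ)/4) := by
    have := key_subadd hε0 hεk
    rw [sub_add_cancel] at this
    have hεa : ε ^ ((3:ℝ)/4) ≤ ε := by
      have := Real.rpow_le_rpow_of_exponent_le hε1 (by norm_num : (3:ℝ)/4 ≤ 1)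
      rwa [Real.rpow_one] at this
    linarith
  set b : ℝ := min k₁ k₂ with hbdef
  set a : ℝ := max k₁ k₂ with hadef
  have hb0 : 0 < b := lt_min h1 h2
  have hba : b ≤ a := min_le_max
  have habsum : a + b = k₁ + k₂ := max_add_min k₁ k₂
  have hsplit : k₁ ^ ((3:ℝ)/4) + k₂ ^ ((3:ℝ)/4) = a ^ ((3:ℝ)/4) + b ^ ((3:ℝ)/4) := by
    rcases le_total k₁ k₂ with h | h
    · rw [hbdef, hadef, min_eq_left h, max_eq_right h]; ring
    · rw [hbdef, hadef, min_eq_right h, max_eq_left h]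
  have h5 : (a + b) ^ ((3:ℝ)/4) ≤ a ^ ((3:ℝ)/4) + 3/4 * b ^ ((3:ℝ)/4) := key_subadd hb0 hba
  have h6 : (k - ε) ^ ((3:ℝ)/4) ≤ (a + b) ^ ((3:ℝ)/4) := by
    apply Real.rpow_le_rpow (by linarith) (by rw [habsum]; exact hsum) (by norm_num)
  -- b^(3/4) ≥ √k / 2
  have h7 : Real.sqrt k / 2 ≤ b ^ ((3:ℝ)/4) := by
    have h7a : (k ^ ((2:ℝ)/3) / 2) ^ ((3:ℝ)/4) ≤ b ^ ((3:ℝ)/4) :=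
      Real.rpow_le_rpow (by positivity) hmin (by norm_num)
    have h7b : (k ^ ((2:ℝ)/3) / 2) ^ ((3:ℝ)/4)
        = k ^ ((1:ℝ)/2) / 2 ^ ((3:ℝ)/4) := by
      rw [Real.div_rpow (by positivity) (by norm_num), ← Real.rpow_mul hk0.le]
      norm_num
    have h7c : (2:ℝ) ^ ((3:ℝ)/4) ≤ 2 := by
      have := Real.rpow_le_rpow_of_exponent_le (by norm_num : (1:ℝ) ≤ 2)
        (by norm_num : (3:ℝ)/4 ≤ 1)
      rwa [Real.rpow_one] at this
    have h7d : k ^ ((1:ℝ)/2) / 2 ≤ k ^ ((1:ℝ)/2) / 2 ^ ((3:ℝ)/4) :=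
      div_le_div_of_nonneg_left (by positivity) (by positivity) h7c
    have h7e : Real.sqrt k = k ^ ((1:ℝ)/2) := by
      rw [Real.sqrt_eq_rpow]
    rw [h7e]
    calc k ^ ((1:ℝ)/2) / 2 ≤ k ^ ((1:ℝ)/2) / 2 ^ ((3:ℝ)/4) := h7d
      _ = (k ^ ((2:ℝ)/3) / 2) ^ ((3:ℝ)/4) := h7b.symm
      _ ≤ b ^ ((3:ℝ)/4) := h7a
  rw [hsplit]
  have : Real.sqrt k / 8 ≥ 2 * ε := by rw [hε]; linarith
  linarith
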